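/- arXiv:1105.4018 — 3 statements merged into one kernel-verified Lean document; each statement's English description precedes it below -/
import Mathlib

section
/- Let ℓ be a prime, let G be a cyclic group of order ℓ acting simply transitively on a set X, and let μ be a cyclic group of order ℓ. A map f : X → μ is affine (i.e., f(x+P)·f(x+Q) = f(x)·f(x+P+Q) for all x, P, Q) if and only if for every x ∈ X and every nonzero P ∈ G one has f(x)^(ℓ−2)·f(x+P)·f(x−P) = 1. -/
/-- Let `ℓ` be a prime, `G` a cyclic group of order `ℓ` acting simply transitively
on `X`, and `μ` a cyclic group of order `ℓ`. A map `f : X → μ` is affine if and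
only if `f(x)^(ℓ−2)·f(x+P)·f(x−P) = 1` for all `x` and all nonzero `P`. -/
theorem affine_iff_partial_two_trivial
    {G X μ : Type*} [AddCommGroup G] [AddTorsor G X] [CommGroup μ]
    (ℓ : ℕ) (hℓ : ℓ.Prime)
    (hG : IsAddCyclic G) (hGcard : Nat.card G = ℓ)
    (hμ : IsCyclic μ) (hμcard : Nat.card μ = ℓ)
    (f : X → μ) :
    (∀ (x : X) (P Q : G), f (P +ᵥ x) * f (Q +ᵥ x) = f x * f ((P + Q) +ᵥ x)) ↔
    (∀ (x : X) (P : G), P ≠ 0 → f x ^ (ℓ - 2) * f (P +ᵥ x) * f (-P +ᵥ x) = 1) := by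
  have hμfin : Finite μ := Nat.finite_of_card_ne_zero (by rw [hμcard]; exact hℓ.pos.ne')
  have hpow : ∀ m : μ, m ^ ℓ = 1 := fun m => by rw [← hμcard]; exact pow_card_eq_one'
  have hl2 : ℓ - 2 + 2 = ℓ := by have := hℓ.two_le; omega
  constructor
  · intro h x P _
    have h1 := h x P (-P)
    rw [add_neg_cancel, zero_vadd] at h1
    rw [mul_assoc, h1, ← sq, ← pow_add, hl2]
    exact hpow _
  · intro h x P Q
    have H' : ∀ (y : X) (R : G), f (R +ᵥ y) * f (-R +ᵥ y) = f y ^ 2 := by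
      intro y R
      by_cases hR : R = 0
      · subst hR; simp [sq]
      · have h1 := h y R hR
        have h2 : f y ^ (ℓ - 2) * f y ^ 2 = 1 := by rw [← pow_add, hl2]; exact hpow _
        have h3 : f y ^ (ℓ - 2) * (f (R +ᵥ y) * f (-R +ᵥ y)) = f y ^ (ℓ - 2) * f y ^ 2 := by
          rw [← mul_assoc, h1, h2]
        exact mul_left_cancel h3
    obtain ⟨t, ht⟩ := hG
    set u : μ := f (t +ᵥ x) / f x with hu
    have ratio : ∀ n : ℕ, f ((n + 1) • t +ᵥ x) * f x = f (n • t +ᵥ x) * f (t +ᵥ x) := by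
      intro n
      induction n with
      | zero => simp [one_smul, mul_comm]
      | succ n ih =>
        have e1 := H' ((n + 1) • t +ᵥ x) t
        have p1 : t +ᵥ ((n + 1) • t +ᵥ x) = (n + 1 + 1) • t +ᵥ x := by
          rw [vadd_vadd]; congr 1; simp [add_nsmul, one_nsmul]; abel
        have p2 : -t +ᵥ ((n + 1) • t +ᵥ x) = n • t +ᵥ x := by
          rw [vadd_vadd]; congr 1; simp only [add_nsmul, one_nsmul]; abel
        rw [p1, p2] at e1
        apply mul_right_cancel (b := f (n • t +ᵥ x))
        calc f ((n + 1 + 1) • t +ᵥ x) * f x * f (n • t +ᵥ x)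
            = f ((n + 1 + 1) • t +ᵥ x) * f (n • t +ᵥ x) * f x := by rw [mul_right_comm]
          _ = f ((n + 1) • t +ᵥ x) ^ 2 * f x := by rw [e1]
          _ = f ((n + 1) • t +ᵥ x) * (f ((n + 1) • t +ᵥ x) * f x) := by rw [sq, mul_assoc]
          _ = f ((n + 1) • t +ᵥ x) * (f (n • t +ᵥ x) * f (t +ᵥ x)) := by rw [ih]
          _ = f ((n + 1) • t +ᵥ x) * f (t +ᵥ x) * f (n • t +ᵥ x) := by
              rw [mul_comm (f (n • t +ᵥ x)), ← mul_assoc]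
    have keyN : ∀ n : ℕ, f (n • t +ᵥ x) = u ^ n * f x := by
      intro n
      induction n with
      | zero => simp
      | succ n ih =>
        apply mul_right_cancel (b := f x)
        rw [ratio n, ih, hu, pow_succ,
          mul_assoc ((f (t +ᵥ x) / f x) ^ n) (f (t +ᵥ x) / f x) (f x),
          div_mul_cancel, mul_right_comm]
    have key : ∀ k : ℤ, f (k • t +ᵥ x) = u ^ k * f x := by
      intro k
      obtain ⟨n, hn | hn⟩ := k.eq_nat_or_neg
      · subst hn; rw [natCast_zsmul, zpow_natCast]; exact keyN n
      · subst hn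
        have e1 := H' x (n • t)
        rw [keyN n] at e1
        rw [neg_zsmul, natCast_zsmul]
        apply mul_left_cancel (a := u ^ n * f x)
        rw [e1, zpow_neg, zpow_natCast, sq]
        simp [mul_comm, mul_assoc, mul_left_comm]
    obtain ⟨k, hk⟩ := ht P
    obtain ⟨l, hl⟩ := ht Q
    replace hk : k • t = P := hk
    replace hl : l • t = Q := hl
    have hPQ : k • t + l • t = (k + l) • t := (add_zsmul t k l).symm
    rw [← hk, ← hl, hPQ, key, key, key, zpow_add]
    simp [mul_comm, mul_assoc, mul_left_comm]
end

section
/- Let G be a finite abelian group and let ⟨·,·⟩ : G × G → ℚ/ℤ be a nondegenerate alternating bilinear pairing (nondegenerate: ⟨x, y⟩ = 0 for all y implies x = 0; alternating: ⟨x, x⟩ = 0 for all x). Then the order of G is a perfect square. -/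
open AddSubgroup AddMonoid

private lemma card_isSquare_aux : ∀ (n : ℕ) {G : Type*} [AddCommGroup G] [Finite G]
    (e : G → G → AddCircle (1 : ℚ)),
    (∀ x y z, e (x + y) z = e x z + e y z) →
    (∀ x y z, e x (y + z) = e x y + e x z) →
    (∀ x, e x x = 0) →
    (∀ x, (∀ y, e x y = 0) → x = 0) →
    Nat.card G = n → IsSquare n := by
  intro n
  induction n using Nat.strong_induction_on with
  | _ n ih =>
  intro G _ _ e hl hr halt hnd hcard
  -- packaged homs
  let E : G → G →+ AddCircle (1 : ℚ) := fun x => AddMonoidHom.mk' (e x) (hr x)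
  have hE : ∀ x z, E x z = e x z := fun _ _ => rfl
  have hFzn : ∀ z (c : ℕ) (w : G), e (c • w) z = c • e w z := by
    intro z c w
    exact map_nsmul (AddMonoidHom.mk' (fun x => e x z) (fun a b => hl a b z)) c w
  have hanti : ∀ p q : G, e q p = - e p q := by
    intro p q
    have h := halt (p + q)
    rw [hl, hr, hr, halt, halt] at h
    linear_combination (norm := abel) h
  -- trivial case
  rcases Nat.lt_or_ge n 2 with hn | hn
  · interval_cases n
    · exact ⟨0, rfl⟩
    · exact ⟨1, rfl⟩
  have hnt : Nontrivial G := by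
    rw [← Finite.one_lt_card_iff_nontrivial, hcard]; omega
  set N := AddMonoid.exponent G with hNdef
  have hN1 : 1 < N := AddMonoid.one_lt_exponent
  have hNsmul : ∀ g : G, N • g = 0 := fun g => AddMonoid.exponent_nsmul_eq_zero g
  obtain ⟨x, hx⟩ := AddMonoid.exists_addOrderOf_eq_exponent
    (AddMonoid.ExponentExists.of_finite (G := G))
  -- torsion of ℚ/ℤ
  have hNQ : (N : ℚ) ≠ 0 := by positivity
  set u : AddCircle (1 : ℚ) := (((N : ℚ)⁻¹ : ℚ) : AddCircle (1 : ℚ)) with hudef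
  have htor : ∀ b : AddCircle (1 : ℚ), N • b = 0 → b ∈ zmultiples u := by
    intro b hb
    induction b using QuotientAddGroup.induction_on with
    | H q =>
      rw [← AddCircle.coe_nsmul, AddCircle.coe_eq_zero_iff] at hb
      obtain ⟨m, hm⟩ := hb
      refine ⟨m, ?_⟩
      show m • (((N : ℚ)⁻¹ : ℚ) : AddCircle (1 : ℚ)) = (q : AddCircle (1 : ℚ))
      rw [← AddCircle.coe_zsmul]
      congr 1
      have hm' : (m : ℚ) = N * q := by
        rw [zsmul_eq_mul, nsmul_eq_mul, mul_one] at hm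
        exact hm
      rw [zsmul_eq_mul, hm', mul_comm, inv_mul_cancel_left₀ hNQ]
  have htorE : ∀ w z : G, e w z ∈ zmultiples u := by
    intro w z
    refine htor _ ?_
    rw [← hE, ← map_nsmul, hNsmul, map_zero]
  -- u has order dividing N
  have huN : N • u = 0 := by
    rw [hudef, ← AddCircle.coe_nsmul]
    have h1 : (N • (N : ℚ)⁻¹ : ℚ) = 1 := by rw [nsmul_eq_mul, mul_inv_cancel₀ hNQ]
    rw [h1, AddCircle.coe_period]
  -- find y with e x y of order N
  obtain ⟨y, hy⟩ : ∃ y, addOrderOf (e x y) = N := by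
    have hRfin : Finite (E x).range := Set.Finite.to_subtype (Set.finite_range (E x))
    obtain ⟨r, hr'⟩ := AddMonoid.exists_addOrderOf_eq_exponent
      (AddMonoid.ExponentExists.of_finite (G := (E x).range))
    obtain ⟨y, hy⟩ := r.2
    refine ⟨y, ?_⟩
    have hcoe : addOrderOf (r : AddCircle (1 : ℚ)) = addOrderOf r :=
      addOrderOf_injective (E x).range.subtype Subtype.coe_injective r
    set d := AddMonoid.exponent (E x).range with hd
    have hNd : N ∣ d := by
      have hdx : d • x = 0 := by
        refine hnd _ fun z => ?_
        have h1 := AddMonoid.exponent_nsmul_eq_zero (⟨E x z, ⟨z, rfl⟩⟩ : (E x).range)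
        have h2 : d • (E x z) = 0 := congrArg Subtype.val h1
        rw [hFzn, ← hE]
        exact h2
      rw [hNdef, ← hx]
      exact addOrderOf_dvd_of_nsmul_eq_zero hdx
    have hdN : d ∣ N := by
      rw [← hr', ← hcoe]
      apply addOrderOf_dvd_of_nsmul_eq_zero
      show N • ((r : AddCircle (1 : ℚ))) = 0
      rw [← hy, ← map_nsmul, hNsmul, map_zero]
    rw [← hE, hy, hcoe, hr']
    exact Nat.dvd_antisymm hdN hNd
  set a := e x y with hadef
  -- zmultiples a = zmultiples u
  have hcard_a : Nat.card (zmultiples a) = N := by rw [Nat.card_zmultiples, hy]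
  have hau : a ∈ zmultiples u := htorE x y
  have hufin : IsOfFinAddOrder u :=
    isOfFinAddOrder_iff_nsmul_eq_zero.2 ⟨N, by omega, huN⟩
  have hufin' : Finite (zmultiples u) := (finite_zmultiples.mpr hufin).to_subtype
  have hzeq : zmultiples a = zmultiples u := by
    refine AddSubgroup.eq_of_le_of_card_ge (zmultiples_le_of_mem hau) ?_
    rw [hcard_a, Nat.card_zmultiples]
    exact Nat.le_of_dvd (by omega) (addOrderOf_dvd_of_nsmul_eq_zero huN)
  -- the hom ψ
  set ψ : G →+ AddCircle (1 : ℚ) × AddCircle (1 : ℚ) := (E x).prod (E y) with hψdef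
  have hψ : ∀ z, ψ z = (e x z, e y z) := fun _ => rfl
  have hyx : e y x = -a := by rw [hanti]
  have hrange : ψ.range = (zmultiples a).prod (zmultiples a) := by
    ext w
    constructor
    · rintro ⟨z, rfl⟩
      rw [hψ, AddSubgroup.mem_prod, hzeq]
      exact ⟨htorE x z, htorE y z⟩
    · rintro ⟨hs, ht⟩
      obtain ⟨β, hβ⟩ := hs
      obtain ⟨γ, hγ⟩ := ht
      refine ⟨(-γ) • x + β • y, ?_⟩
      have h1 : e x ((-γ) • x + β • y) = β • a := by
        rw [hr, ← hE, ← hE, map_zsmul, map_zsmul, hE, hE, halt, smul_zero, zero_add, hadef]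
      have h2 : e y ((-γ) • x + β • y) = γ • a := by
        rw [hr, ← hE, ← hE, map_zsmul, map_zsmul, hE, hE, halt, hyx, smul_zero, add_zero,
          smul_neg, neg_smul, neg_neg]
      rw [hψ, h1, h2]
      exact Prod.ext hβ hγ
  -- kernel membership
  have hker : ∀ z : G, z ∈ ψ.ker ↔ e x z = 0 ∧ e y z = 0 := by
    intro z
    rw [AddMonoidHom.mem_ker, hψ, Prod.mk_eq_zero]
  set K := ψ.ker with hK
  -- cardinality count
  have hcount : n = N * N * Nat.card K := by
    rw [← hcard, AddSubgroup.card_eq_card_quotient_mul_card_addSubgroup K]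
    congr 1
    rw [Nat.card_congr (QuotientAddGroup.quotientKerEquivRange ψ).toEquiv, hrange,
      Nat.card_congr (AddSubgroup.prodEquiv (zmultiples a) (zmultiples a)).toEquiv,
      Nat.card_prod, hcard_a]
  -- the pairing on the kernel is nondegenerate
  have hndK : ∀ z : K, (∀ w : K, e z w = 0) → z = 0 := by
    intro z hz0
    have hz := (hker z).mp z.2
    have hz1 : e (z : G) x = 0 := by rw [hanti, hz.1, neg_zero]
    have hz2 : e (z : G) y = 0 := by rw [hanti, hz.2, neg_zero]
    have hzz : (z : G) = 0 := by
      refine hnd _ fun g => ?_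
      obtain ⟨s, hs⟩ : e x g ∈ zmultiples a := hzeq ▸ htorE x g
      obtain ⟨t, ht⟩ : e y g ∈ zmultiples a := hzeq ▸ htorE y g
      have hg' : g + t • x - s • y ∈ K := by
        rw [hker]
        constructor
        · rw [← hE, map_sub, map_add, map_zsmul, map_zsmul, hE, hE, hE, halt, smul_zero,
            add_zero, ← hadef, ← hs, sub_self]
        · rw [← hE, map_sub, map_add, map_zsmul, map_zsmul, hE, hE, hE, halt, hyx, smul_zero,
            sub_zero, smul_neg, ← ht, add_neg_cancel]
      have h1 : e (z : G) (g + t • x - s • y) = 0 := hz0 ⟨_, hg'⟩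
      rw [← hE, map_sub, map_add, map_zsmul, map_zsmul, hE, hE, hE, hz1, hz2, smul_zero,
        smul_zero, add_zero, sub_zero] at h1
      exact h1
    exact Subtype.ext hzz
  -- induction
  have hKlt : Nat.card K < n := by
    have hKpos : 0 < Nat.card K := Nat.card_pos
    have hle : 2 * 2 * Nat.card K ≤ N * N * Nat.card K :=
      Nat.mul_le_mul_right _ (Nat.mul_le_mul hN1 hN1)
    omega
  obtain ⟨k, hk⟩ := ih (Nat.card K) hKlt (fun (z w : K) => e z w)
    (fun a b c => hl a b c) (fun a b c => hr a b c) (fun a => halt a) hndK rfl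
  exact ⟨N * k, by rw [hcount, hk]; ring⟩

/-- A finite abelian group carrying a nondegenerate alternating bilinear pairing
with values in `ℚ/ℤ` has square order. -/
theorem card_isSquare_of_nondeg_alternating_pairing
    {G : Type*} [AddCommGroup G] [Fintype G]
    (e : G → G → AddCircle (1 : ℚ))
    (hl : ∀ x y z, e (x + y) z = e x z + e y z)
    (hr : ∀ x y z, e x (y + z) = e x y + e x z)
    (halt : ∀ x, e x x = 0)
    (hnd : ∀ x, (∀ y, e x y = 0) → x = 0) :
    IsSquare (Fintype.card G) := by
  rw [← Nat.card_eq_fintype_card]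
  exact card_isSquare_aux _ e hl hr halt hnd rfl
end

section
/- Let E be the elliptic curve over ℚ defined by the Weierstrass equation y² + xy + y = x³ + x² − 12241995603·x + 781027222459441. Then the point P = (−49091, 35573052) lies on E, is not the identity, and satisfies 5·P = O; that is, P is a rational point of order exactly 5. -/
open WeierstrassCurve.Affine WeierstrassCurve.Affine.Point

private lemma some_eq_some' {F : Type*} [Field F] {W : WeierstrassCurve.Affine F}
    {x₁ y₁ x₂ y₂ : F} (h₁ : W.Nonsingular x₁ y₁) (h₂ : W.Nonsingular x₂ y₂)
    (hx : x₁ = x₂) (hy : y₁ = y₂) :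
    WeierstrassCurve.Affine.Point.some _ _ h₁ = WeierstrassCurve.Affine.Point.some _ _ h₂ := by
  subst hx; subst hy; rfl

/-- The point `(−49091, 35573052)` is a rational point of order exactly `5` on
the elliptic curve `y² + xy + y = x³ + x² − 12241995603x + 781027222459441`. -/
theorem torsion_point_of_order_five :
    let W : WeierstrassCurve.Affine ℚ :=
      { a₁ := 1, a₂ := 1, a₃ := 1, a₄ := -12241995603, a₆ := 781027222459441 }
    ∃ h : W.Nonsingular (-49091) 35573052,
      WeierstrassCurve.Affine.Point.some _ _ h ≠ 0 ∧
      5 • WeierstrassCurve.Affine.Point.some _ _ h = 0 := by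
  intro W
  have hW1 : W.a₁ = 1 := rfl
  have hW2 : W.a₂ = 1 := rfl
  have hW3 : W.a₃ = 1 := rfl
  have hW4 : W.a₄ = -12241995603 := rfl
  have hW6 : W.a₆ = 781027222459441 := rfl
  have hP : W.Nonsingular (-49091) 35573052 := by
    rw [nonsingular_iff, equation_iff, hW1, hW2, hW3, hW4, hW6]
    norm_num
  have h2 : W.Nonsingular 103151 (-24867022) := by
    rw [nonsingular_iff, equation_iff, hW1, hW2, hW3, hW4, hW6]
    norm_num
  have h3 : W.Nonsingular 103151 24763870 := by
    rw [nonsingular_iff, equation_iff, hW1, hW2, hW3, hW4, hW6]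
    norm_num
  have h4 : W.Nonsingular (-49091) (-35523962) := by
    rw [nonsingular_iff, equation_iff, hW1, hW2, hW3, hW4, hW6]
    norm_num
  refine ⟨hP, some_ne_zero hP, ?_⟩
  have hy1 : (35573052 : ℚ) ≠ W.negY (-49091) 35573052 := by
    rw [negY, hW1, hW3]; norm_num
  have hx2 : (103151 : ℚ) ≠ -49091 := by norm_num
  -- slopes
  have hs1 : W.slope (-49091) (-49091) 35573052 35573052 = -71 := by
    rw [slope_of_Y_ne rfl hy1, negY, hW1, hW2, hW3, hW4]
    norm_num
  have hs2 : W.slope 103151 (-49091) (-24867022) 35573052 = -397 := by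
    rw [slope_of_X_ne hx2]; norm_num
  have hs3 : W.slope 103151 (-49091) 24763870 35573052 = -71 := by
    rw [slope_of_X_ne hx2]; norm_num
  -- coordinates
  have hxA : W.addX (-49091) (-49091) (-71) = 103151 := by
    rw [addX, hW1, hW2]; norm_num
  have hyA : W.addY (-49091) (-49091) 35573052 (-71) = -24867022 := by
    rw [addY, negAddY, addX, negY, hW1, hW2, hW3]; norm_num
  have hxB : W.addX 103151 (-49091) (-397) = 103151 := by
    rw [addX, hW1, hW2]; norm_num
  have hyB : W.addY 103151 (-49091) (-24867022) (-397) = 24763870 := by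
    rw [addY, negAddY, addX, negY, hW1, hW2, hW3]; norm_num
  have hxC : W.addX 103151 (-49091) (-71) = -49091 := by
    rw [addX, hW1, hW2]; norm_num
  have hyC : W.addY 103151 (-49091) 24763870 (-71) = -35523962 := by
    rw [addY, negAddY, addX, negY, hW1, hW2, hW3]; norm_num
  -- the additions
  have e1 : some _ _ hP + some _ _ hP = some _ _ h2 := by
    rw [add_self_of_Y_ne hy1]
    exact some_eq_some' _ h2 (by rw [hs1]; exact hxA) (by rw [hs1]; exact hyA)
  have e2 : some _ _ h2 + some _ _ hP = some _ _ h3 := by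
    rw [add_of_X_ne hx2]
    exact some_eq_some' _ h3 (by rw [hs2]; exact hxB) (by rw [hs2]; exact hyB)
  have e3 : some _ _ h3 + some _ _ hP = some _ _ h4 := by
    rw [add_of_X_ne hx2]
    exact some_eq_some' _ h4 (by rw [hs3]; exact hxC) (by rw [hs3]; exact hyC)
  have e4 : some _ _ h4 + some _ _ hP = 0 := by
    refine add_of_Y_eq rfl ?_
    rw [negY, hW1, hW3]; norm_num
  have h5 : (5 : ℕ) • some _ _ hP = some _ _ hP + some _ _ hP + some _ _ hP + some _ _ hP + some _ _ hP := by
    abel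
  rw [h5, e1, e2, e3, e4]
end
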